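/- For every finite nonempty alphabet Σ and all positive integers m, n, there exists an m-shift de Bruijn sequence of order n over Σ. -/

import Mathlib

/-- `w` is an `m`-shift de Bruijn sequence of order `n`: every word of length `n`
appears exactly once in `w` as a factor starting at a position `i*m` (0-indexed). -/
def IsMSdB {α : Type*} (m n : ℕ) (w : List α) : Prop :=
  ∀ u : List α, u.length = n → ∃! i : ℕ, i * m + n ≤ w.length ∧ (w.drop (i * m)).take n = u

open List Finset

section Euler
variable {V E : Type*} (src dst : E → V)

/-- Walks/trails in a digraph with edge set `E`, encoded as lists of edges. -/
inductive Tr : V → V → List E → Prop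
  | nil (a : V) : Tr a a []
  | cons (e : E) {b : V} {L : List E} : Tr (dst e) b L → Tr (src e) b (e :: L)

variable {src dst}

lemma Tr.append {a b : V} {L : List E} (h1 : Tr src dst a b L) :
    ∀ {c : V} {M : List E}, Tr src dst b c M → Tr src dst a c (L ++ M) := by
  induction h1 with
  | nil a => intro c M h2; exact h2
  | cons e h ih => intro c M h2; exact Tr.cons e (ih h2)

lemma Tr.split {L : List E} : ∀ {a c : V} {M : List E}, Tr src dst a c (L ++ M) →
    ∃ b, Tr src dst a b L ∧ Tr src dst b c M := by
  induction L with
  | nil => intro a c M h; exact ⟨a, Tr.nil a, h⟩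
  | cons e L ih =>
    intro a c M h
    cases h with
    | cons _ h' =>
      obtain ⟨b, h1, h2⟩ := ih h'
      exact ⟨b, Tr.cons e h1, h2⟩

lemma Tr.eq_of_nil {a b : V} (h : Tr src dst a b ([] : List E)) : a = b := by
  cases h; rfl

lemma Tr.src_eq {a b : V} {e : E} {L : List E} (h : Tr src dst a b (e :: L)) :
    a = src e ∧ Tr src dst (dst e) b L := by
  cases h with
  | cons _ h' => exact ⟨rfl, h'⟩

variable [DecidableEq V] [DecidableEq E]

lemma Tr.count {a b : V} {L : List E} (h : Tr src dst a b L) (v : V) :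
    L.countP (fun e => dst e = v) + (if a = v then 1 else 0)
      = L.countP (fun e => src e = v) + (if b = v then 1 else 0) := by
  induction h with
  | nil a => rfl
  | cons e h ih =>
    simp only [List.countP_cons, decide_eq_true_eq]
    split_ifs at ih ⊢ <;> omega

lemma Tr.head_or {x b : V} {L : List E} (h : Tr src dst x b L) :
    (L = [] ∧ x = b) ∨ ∃ f L', L = f :: L' ∧ x = src f := by
  cases h with
  | nil => exact Or.inl ⟨rfl, rfl⟩
  | cons f h' => exact Or.inr ⟨f, _, rfl, rfl⟩

lemma Tr.dst_mem {x b : V} {L : List E} (h : Tr src dst x b L) :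
    ∀ e ∈ L, dst e = b ∨ dst e ∈ L.map src := by
  induction h with
  | nil => simp
  | cons u h ih =>
    intro e he
    rcases List.mem_cons.1 he with rfl | he'
    · rcases h.head_or with ⟨_, heq⟩ | ⟨f, L', hL, heq⟩
      · exact Or.inl heq
      · subst hL
        exact Or.inr (by simp only [List.map_cons, List.mem_cons]; exact Or.inr (Or.inl heq))
    · rcases ih e he' with h | h
      · exact Or.inl h
      · exact Or.inr (by simp only [List.map_cons, List.mem_cons]; exact Or.inr h)

lemma countP_le_card (S : Finset E) (p : E → Prop) [DecidablePred p] {L : List E}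
    (hnd : L.Nodup) (hsub : ∀ e ∈ L, e ∈ S) :
    L.countP (fun e => p e) ≤ (S.filter p).card := by
  rw [List.countP_eq_length_filter, ← List.toFinset_card_of_nodup (hnd.filter _)]
  apply Finset.card_le_card
  intro e he
  simp only [List.mem_toFinset, List.mem_filter, decide_eq_true_eq] at he
  exact Finset.mem_filter.2 ⟨hsub e he.1, he.2⟩

lemma exists_unused (S : Finset E)
    (hbal : ∀ v, (S.filter (fun e => dst e = v)).card = (S.filter (fun e => src e = v)).card)
    {L : List E} {x b : V} (ht : Tr src dst x b L) (hnd : L.Nodup)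
    (hsub : ∀ e ∈ L, e ∈ S) (hne : b ≠ x) :
    ∃ e, e ∈ S ∧ e ∉ L ∧ src e = b := by
  by_contra hcon
  push_neg at hcon
  have hc := ht.count b
  rw [if_neg (fun h => hne h.symm), if_pos rfl] at hc
  have h2 : L.countP (fun e => dst e = b) ≤ (S.filter (fun e => dst e = b)).card :=
    countP_le_card S _ hnd hsub
  have h3 : (S.filter (fun e => src e = b)).card ≤ L.countP (fun e => src e = b) := by
    rw [List.countP_eq_length_filter, ← List.toFinset_card_of_nodup (hnd.filter _)]
    apply Finset.card_le_card
    intro e he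
    simp only [Finset.mem_filter] at he
    have heL : e ∈ L := by
      by_contra hnotL
      exact (hcon e he.1 hnotL) he.2
    simp only [List.mem_toFinset, List.mem_filter, decide_eq_true_eq]
    exact ⟨heL, he.2⟩
  have := hbal b
  omega

lemma extend (S : Finset E)
    (hbal : ∀ v, (S.filter (fun e => dst e = v)).card = (S.filter (fun e => src e = v)).card) :
    ∀ (k : ℕ) (L : List E) (x b : V), Tr src dst x b L → L.Nodup → (∀ e ∈ L, e ∈ S) →
      (S.filter (fun e => e ∉ L)).card ≤ k →
      ∃ M, Tr src dst b x M ∧ (L ++ M).Nodup ∧ ∀ e ∈ M, e ∈ S := by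
  intro k
  induction k with
  | zero =>
    intro L x b ht hnd hsub hk
    by_cases hbx : b = x
    · subst hbx; exact ⟨[], Tr.nil b, by simpa using hnd, by simp⟩
    · obtain ⟨e, heS, heL, -⟩ := exists_unused S hbal ht hnd hsub hbx
      have : e ∈ S.filter (fun e => e ∉ L) := Finset.mem_filter.2 ⟨heS, heL⟩
      have := Finset.card_pos.2 ⟨e, this⟩
      omega
  | succ k ih =>
    intro L x b ht hnd hsub hk
    by_cases hbx : b = x
    · subst hbx; exact ⟨[], Tr.nil b, by simpa using hnd, by simp⟩
    · obtain ⟨e, heS, heL, hesrc⟩ := exists_unused S hbal ht hnd hsub hbx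
      have htrail : Tr src dst x (dst e) (L ++ [e]) := by
        refine ht.append ?_
        rw [← hesrc]
        exact Tr.cons e (Tr.nil (dst e))
      have hnd' : (L ++ [e]).Nodup := by
        simp [List.nodup_append, hnd, heL]; intro a ha hae; exact heL (hae ▸ ha)
      have hsub' : ∀ f ∈ L ++ [e], f ∈ S := by
        intro f hf
        rcases List.mem_append.1 hf with hf | hf
        · exact hsub f hf
        · simp only [List.mem_singleton] at hf; subst hf; exact heS
      have hmeas : (S.filter (fun f => f ∉ L ++ [e])).card ≤ k := by
        have hsubset : S.filter (fun f => f ∉ L ++ [e]) ⊆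
            (S.filter (fun f => f ∉ L)).erase e := by
          intro f hf
          simp only [Finset.mem_filter, List.mem_append, List.mem_singleton, not_or] at hf
          refine Finset.mem_erase.2 ⟨?_, Finset.mem_filter.2 ⟨hf.1, hf.2.1⟩⟩
          exact fun h => hf.2.2 h
        have h1 := Finset.card_le_card hsubset
        have h2 : e ∈ S.filter (fun f => f ∉ L) := Finset.mem_filter.2 ⟨heS, heL⟩
        rw [Finset.card_erase_of_mem h2] at h1
        have := Finset.card_pos.2 ⟨e, h2⟩
        omega
      obtain ⟨M, hM, hMnd, hMsub⟩ := ih (L ++ [e]) x (dst e) htrail hnd' hsub' hmeas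
      refine ⟨e :: M, ?_, ?_, ?_⟩
      · rw [← hesrc]; exact Tr.cons e hM
      · rwa [List.append_assoc] at hMnd
      · intro f hf
        rcases List.mem_cons.1 hf with rfl | hf
        · exact heS
        · exact hMsub f hf

lemma euler [Fintype E] (a : V)
    (hbal : ∀ v, (univ.filter (fun e => dst e = v)).card
      = (univ.filter (fun e => src e = v)).card)
    (hconn : ∀ e : E, ∃ P, Tr src dst a (src e) P) :
    ∃ L : List E, Tr src dst a a L ∧ L.Nodup ∧ ∀ e : E, e ∈ L := by
  suffices h : ∀ (k : ℕ) (L : List E), Tr src dst a a L → L.Nodup →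
      Fintype.card E - L.length ≤ k →
      ∃ L', Tr src dst a a L' ∧ L'.Nodup ∧ ∀ e : E, e ∈ L' by
    exact h (Fintype.card E) [] (Tr.nil a) List.nodup_nil (by simp)
  intro k
  induction k with
  | zero =>
    intro L ht hnd hk
    refine ⟨L, ht, hnd, fun e => ?_⟩
    have h1 : L.length ≤ Fintype.card E := hnd.length_le_card
    have h2 : L.toFinset.card = Fintype.card E := by
      rw [List.toFinset_card_of_nodup hnd]; omega
    have h3 : L.toFinset = Finset.univ := Finset.eq_univ_of_card _ h2
    have : e ∈ L.toFinset := by rw [h3]; exact Finset.mem_univ e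
    exact List.mem_toFinset.1 this
  | succ k ih =>
    intro L ht hnd hk
    by_cases hall : ∀ e : E, e ∈ L
    · exact ⟨L, ht, hnd, hall⟩
    push_neg at hall
    obtain ⟨e₀, he₀⟩ := hall
    set Vset : Finset V := insert a (L.map src).toFinset with hVset
    have hdstV : ∀ e ∈ L, dst e ∈ Vset := by
      intro e he
      rcases ht.dst_mem e he with h | h
      · rw [h]; exact Finset.mem_insert_self a _
      · exact Finset.mem_insert_of_mem (List.mem_toFinset.2 h)
    -- there is an unused edge whose source is on the trail
    have hexists : ∃ e, e ∉ L ∧ src e ∈ Vset := by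
      by_contra hcon
      push_neg at hcon
      have hwalk : ∀ (P : List E) (x y : V), Tr src dst x y P → x ∈ Vset →
          y ∈ Vset ∧ ∀ e ∈ P, e ∈ L := by
        intro P
        induction P with
        | nil =>
          intro x y h hx
          exact ⟨h.eq_of_nil ▸ hx, by simp⟩
        | cons u P ihP =>
          intro x y h hx
          obtain ⟨rfl, h'⟩ := h.src_eq
          have huL : u ∈ L := by
            by_contra hu
            exact absurd hx (hcon u hu)
          obtain ⟨hy, hP⟩ := ihP (dst u) y h' (hdstV u huL)
          refine ⟨hy, fun e he => ?_⟩
          rcases List.mem_cons.1 he with rfl | he'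
          · exact huL
          · exact hP e he'
      obtain ⟨P, hP⟩ := hconn e₀
      have hPe : Tr src dst a (dst e₀) (P ++ [e₀]) :=
        hP.append (Tr.cons e₀ (Tr.nil (dst e₀)))
      have := (hwalk (P ++ [e₀]) a (dst e₀) hPe (Finset.mem_insert_self a _)).2 e₀ (by simp)
      exact he₀ this
    obtain ⟨e, heL, hsrcV⟩ := hexists
    -- the complement of L is balanced
    set S' : Finset E := univ.filter (fun f => f ∉ L) with hS'
    have hsplit : ∀ (p : E → Prop) [DecidablePred p],
        (univ.filter p).card = L.countP (fun f => p f) + (S'.filter p).card := by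
      intro p _
      have hU : univ.filter p
          = (L.filter (fun f => p f)).toFinset ∪ (S'.filter p) := by
        ext f
        simp only [Finset.mem_filter, Finset.mem_union, List.mem_toFinset, List.mem_filter,
          Finset.mem_univ, true_and, decide_eq_true_eq, hS']
        tauto
      rw [hU, Finset.card_union_of_disjoint, List.toFinset_card_of_nodup (hnd.filter _),
        List.countP_eq_length_filter]
      rw [Finset.disjoint_left]
      intro f hf
      simp only [List.mem_toFinset, List.mem_filter, decide_eq_true_eq] at hf
      simp only [Finset.mem_filter, Finset.mem_univ, true_and, hS']
      intro hff
      exact hff.1 hf.1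
    have hbal' : ∀ v, (S'.filter (fun f => dst f = v)).card
        = (S'.filter (fun f => src f = v)).card := by
      intro v
      have hc := ht.count v
      have h1 := hsplit (fun f => dst f = v)
      have h2 := hsplit (fun f => src f = v)
      have h3 := hbal v
      omega
    have heS' : e ∈ S' := Finset.mem_filter.2 ⟨Finset.mem_univ e, heL⟩
    -- a nonempty closed trail from (src e) using only unused edges
    have htre : Tr src dst (src e) (dst e) [e] := Tr.cons e (Tr.nil (dst e))
    obtain ⟨M, hM, hMnd, hMsub⟩ := extend S' hbal' S'.card [e] (src e) (dst e) htre
      (List.nodup_singleton e) (by simpa using heS')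
      (Finset.card_le_card (Finset.filter_subset _ _))
    set C : List E := e :: M with hC
    have hCtr : Tr src dst (src e) (src e) C := Tr.cons e hM
    have hCnd : C.Nodup := hMnd
    have hCnotL : ∀ f ∈ C, f ∉ L := by
      intro f hf
      rcases List.mem_cons.1 hf with rfl | hf
      · exact heL
      · have := hMsub f hf
        simp only [hS', Finset.mem_filter] at this
        exact this.2
    have hClen : 0 < C.length := by simp [hC]
    -- splice C into the closed trail L at the vertex (src e)
    rcases Finset.mem_insert.1 hsrcV with hva | hvm
    · -- src e = a : append C at the end
      have htr' : Tr src dst a a (L ++ C) := ht.append (hva ▸ hCtr)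
      have hnd' : (L ++ C).Nodup :=
        hnd.append hCnd (fun f hfL hfC => hCnotL f hfC hfL)
      refine ih (L ++ C) htr' hnd' ?_
      have := hnd'.length_le_card
      simp only [List.length_append] at this ⊢
      omega
    · -- src e = src u for some u ∈ L
      obtain ⟨u, huL, husrc⟩ := List.mem_map.1 (List.mem_toFinset.1 hvm)
      obtain ⟨P, Q, hLPQ⟩ := List.append_of_mem huL
      rw [hLPQ] at ht
      obtain ⟨c, htP, htQ⟩ := ht.split
      have hcu : c = src u := htQ.src_eq.1
      have htrC : Tr src dst c c C := by rw [hcu, husrc]; exact hCtr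
      have htr' : Tr src dst a a (P ++ (C ++ (u :: Q))) :=
        htP.append (htrC.append htQ)
      have hperm : (P ++ (C ++ (u :: Q))).Perm ((P ++ u :: Q) ++ C) := by
        calc (P ++ (C ++ (u :: Q))).Perm (P ++ ((u :: Q) ++ C)) :=
              List.Perm.append_left P (List.perm_append_comm)
          _ = ((P ++ u :: Q) ++ C) := by rw [List.append_assoc]
      have hndLC : ((P ++ u :: Q) ++ C).Nodup := by
        rw [← hLPQ]
        exact hnd.append hCnd (fun f hfL hfC => hCnotL f hfC hfL)
      have hnd' : (P ++ (C ++ (u :: Q))).Nodup := hperm.symm.nodup hndLC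
      refine ih _ htr' hnd' ?_
      have := hnd'.length_le_card
      have hlen : (P ++ (C ++ (u :: Q))).length = L.length + C.length := by
        rw [hLPQ]; simp; omega
      omega
end Euler

section Build

variable {α : Type*} [DecidableEq α]

private lemma db_bal [Fintype α] (m n : ℕ) (v : List α) :
    ((Finset.univ : Finset (List.Vector α n)).filter (fun e => e.val.drop m = v)).card
      = (Finset.univ.filter (fun e : List.Vector α n => e.val.take (n - m) = v)).card := by
  have hex : ∀ e : List.Vector α n, (e.val.drop m ++ e.val.take m).length = n := by
    intro e
    simp only [List.length_append, List.length_drop, List.length_take, e.2]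
    omega
  have hex2 : ∀ e : List.Vector α n,
      (e.val.drop (n - m) ++ e.val.take (n - m)).length = n := by
    intro e
    simp only [List.length_append, List.length_drop, List.length_take, e.2]
    omega
  have hld : ∀ e : List.Vector α n, (e.val.drop m).length = n - m := by
    intro e; simp [e.2]
  have hlt : ∀ (k : ℕ) (e : List.Vector α n), k ≤ n → (e.val.take k).length = k := by
    intro k e hk; simp [e.2]; omega
  refine Finset.card_bij' (fun e _ => ⟨e.val.drop m ++ e.val.take m, hex e⟩)
    (fun e _ => ⟨e.val.drop (n - m) ++ e.val.take (n - m), hex2 e⟩) ?_ ?_ ?_ ?_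
  · intro e he
    simp only [Finset.mem_filter, Finset.mem_univ, true_and] at he ⊢
    refine Finset.mem_filter.2 ⟨Finset.mem_univ _, ?_⟩
    show (e.val.drop m ++ e.val.take m).take (n - m) = v
    rw [List.take_left' (hld e)]
    exact he
  · intro e he
    simp only [Finset.mem_filter, Finset.mem_univ, true_and] at he ⊢
    refine Finset.mem_filter.2 ⟨Finset.mem_univ _, ?_⟩
    show (e.val.drop (n - m) ++ e.val.take (n - m)).drop m = v
    rcases le_or_gt m n with h | h
    · rw [List.drop_left' (show (e.val.drop (n - m)).length = m by simp [e.2]; omega)]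
      exact he
    · have hnm : n - m = 0 := by omega
      rw [hnm] at he ⊢
      simp only [List.take_zero] at he
      simp only [List.drop_zero, List.take_zero, List.append_nil]
      rw [List.drop_eq_nil_of_le (by rw [e.2]; omega)]
      exact he
  · intro e he
    apply Subtype.ext
    simp only
    rw [List.drop_left' (hld e), List.take_left' (hld e), List.take_append_drop]
  · intro e he
    apply Subtype.ext
    simp only
    rcases le_or_gt m n with h | h
    · rw [List.drop_left' (show (e.val.drop (n - m)).length = m by simp [e.2]; omega),
        List.take_left' (show (e.val.drop (n - m)).length = m by simp [e.2]; omega),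
        List.take_append_drop]
    · have hnm : n - m = 0 := by omega
      rw [hnm]
      simp only [List.drop_zero, List.take_zero, List.append_nil]
      rw [List.drop_eq_nil_of_le (by rw [e.2]; omega),
        List.take_of_length_le (by rw [e.2]; omega)]
      simp

private lemma db_reach (m n : ℕ) (hm : 1 ≤ m) (c0 : α) (x y : List α)
    (hx : x.length = n - m) (hy : y.length = n - m) :
    ∃ P, Tr (fun e : List.Vector α n => e.val.take (n - m))
      (fun e : List.Vector α n => e.val.drop m) x y P := by
  set sr : List.Vector α n → List α := fun e => e.val.take (n - m) with hsr
  set ds : List.Vector α n → List α := fun e => e.val.drop m with hds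
  rcases Nat.eq_zero_or_pos (n - m) with hd | hd
  · rw [hd, List.length_eq_zero_iff] at hx hy
    subst hx; subst hy
    exact ⟨[], Tr.nil []⟩
  have hmn : m ≤ n := by omega
  -- single step
  have hstep : ∀ x z : List α, x.length = n - m → z.length = m →
      ∃ P, Tr sr ds x ((x ++ z).drop m) P := by
    intro x z hx hz
    have hlen : (x ++ z).length = n := by
      simp only [List.length_append, hx, hz]; omega
    refine ⟨[(⟨x ++ z, hlen⟩ : List.Vector α n)], ?_⟩
    have h1 : sr (⟨x ++ z, hlen⟩ : List.Vector α n) = x := by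
      simp only [hsr]; exact List.take_left' hx
    have h2 := Tr.cons (src := sr) (dst := ds) (⟨x ++ z, hlen⟩ : List.Vector α n)
      (Tr.nil (ds (⟨x ++ z, hlen⟩ : List.Vector α n)))
    rwa [h1] at h2
  -- chains of steps
  have hchunk : ∀ (t : ℕ) (Z : List α), Z.length = t * m → ∀ x : List α, x.length = n - m →
      ∃ P, Tr sr ds x ((x ++ Z).drop Z.length) P := by
    intro t
    induction t with
    | zero =>
      intro Z hZ x hx
      rw [Nat.zero_mul, List.length_eq_zero_iff] at hZ
      subst hZ
      exact ⟨[], by simpa using Tr.nil x⟩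
    | succ t ih =>
      intro Z hZ x hx
      set z : List α := Z.take m with hz
      set Z' : List α := Z.drop m with hZ'
      have hmle : m ≤ (t + 1) * m := by nlinarith
      have hzlen : z.length = m := by
        rw [hz, List.length_take, hZ]; omega
      have hzZ : z ++ Z' = Z := List.take_append_drop m Z
      have hZ'len : Z'.length = t * m := by
        rw [hZ', List.length_drop, hZ, Nat.succ_mul]; omega
      obtain ⟨P1, h1⟩ := hstep x z hx hzlen
      have hx'len : ((x ++ z).drop m).length = n - m := by
        simp only [List.length_drop, List.length_append, hx, hzlen]; omega
      obtain ⟨P2, h2⟩ := ih Z' hZ'len ((x ++ z).drop m) hx'len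
      refine ⟨P1 ++ P2, ?_⟩
      have e3 : (x ++ z ++ Z').drop m = (x ++ z).drop m ++ Z' := by
        rw [List.drop_append,
          show m - (x ++ z).length = 0 by simp only [List.length_append, hx, hzlen]; omega,
          List.drop_zero]
      have hkey : ((x ++ z).drop m ++ Z').drop Z'.length = (x ++ Z).drop Z.length := by
        have e1 : x ++ Z = (x ++ z) ++ Z' := by rw [List.append_assoc, hzZ]
        have e2 : Z.length = m + Z'.length := by
          rw [← hzZ]; simp only [List.length_append, hzlen]
        rw [e1, e2, ← List.drop_drop, e3]
      rw [← hkey]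
      exact h1.append h2
  -- now reach y
  set W : List α := List.replicate ((n - m) * m - (n - m)) c0 with hW
  have hWlen : W.length = (n - m) * m - (n - m) := by simp [hW]
  have hge : (n - m) ≤ (n - m) * m := Nat.le_mul_of_pos_right _ hm
  have hZlen : (W ++ y).length = (n - m) * m := by
    simp only [List.length_append, hWlen, hy]
    exact Nat.sub_add_cancel hge
  obtain ⟨P, hP⟩ := hchunk (n - m) (W ++ y) hZlen x hx
  refine ⟨P, ?_⟩
  have hfin : (x ++ (W ++ y)).drop (W ++ y).length = y := by
    rw [← List.append_assoc]
    have hxW : (x ++ W).length = (W ++ y).length := by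
      simp only [List.length_append, hx, hWlen, hy]
      exact Nat.add_comm _ _
    rw [← hxW, List.drop_left]
  rwa [hfin] at hP

end Build
section Assemble

variable {α : Type*} [DecidableEq α]

private def dbF (m n : ℕ) (c0 : α) : List (List.Vector α n) → List α
  | [] => List.replicate (n - m) c0
  | u :: L => (u.val.take m ++ List.replicate (m - n) c0) ++ dbF m n c0 L

private lemma db_block_len (m n : ℕ) (c0 : α) (u : List.Vector α n) :
    (u.val.take m ++ List.replicate (m - n) c0).length = m := by
  simp only [List.length_append, List.length_take, List.length_replicate, u.2]
  omega

private lemma dbF_length (m n : ℕ) (c0 : α) :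
    ∀ L : List (List.Vector α n), (dbF m n c0 L).length = L.length * m + (n - m) := by
  intro L
  induction L with
  | nil =>
    show (List.replicate (n - m) c0).length = ([] : List (List.Vector α n)).length * m + (n - m)
    simp
  | cons u L ih =>
    show ((u.val.take m ++ List.replicate (m - n) c0) ++ dbF m n c0 L).length = _
    rw [List.length_append, db_block_len, ih, List.length_cons, Nat.succ_mul]
    omega

private lemma dbP (m n : ℕ) (c0 : α) :
    ∀ (L : List (List.Vector α n)) (x : List α),
      Tr (fun e : List.Vector α n => e.val.take (n - m))
        (fun e : List.Vector α n => e.val.drop m) x (List.replicate (n - m) c0) L →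
      x.length = n - m → (dbF m n c0 L).take (n - m) = x := by
  intro L
  induction L with
  | nil =>
    intro x h hx
    rw [h.eq_of_nil]
    show (List.replicate (n - m) c0).take (n - m) = _
    rw [List.take_of_length_le (by simp)]
  | cons u L ih =>
    intro x h hx
    obtain ⟨hx2, h'⟩ := h.src_eq
    rw [hx2]
    show ((u.val.take m ++ List.replicate (m - n) c0) ++ dbF m n c0 L).take (n - m)
      = u.val.take (n - m)
    rw [List.take_append, db_block_len]
    have hih : (dbF m n c0 L).take (n - m) = u.val.drop m :=
      ih (u.val.drop m) h' (by simp [u.2])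
    have h2 : (dbF m n c0 L).take (n - m - m) = (u.val.drop m).take (n - m - m) := by
      conv_lhs => rw [show n - m - m = min (n - m - m) (n - m) by omega,
        ← List.take_take, hih]
    rw [h2]
    rcases le_or_gt n m with hmn | hmn
    · simp [show n - m = 0 by omega]
    · have hr0 : m - n = 0 := by omega
      rw [hr0]
      simp only [List.replicate_zero, List.append_nil]
      rw [List.take_take]
      rcases le_or_gt m (n - m) with h3 | h3
      · rw [show min (n - m) m = m by omega]
        conv_rhs => rw [show n - m = m + (n - m - m) by omega, List.take_add]
      · rw [show min (n - m) m = n - m by omega, show n - m - m = 0 by omega]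
        simp

private lemma dbQ (m n : ℕ) (c0 : α) :
    ∀ (L : List (List.Vector α n)) (x : List α),
      Tr (fun e : List.Vector α n => e.val.take (n - m))
        (fun e : List.Vector α n => e.val.drop m) x (List.replicate (n - m) c0) L →
      ∀ (i : ℕ) (hi : i < L.length),
        ((dbF m n c0 L).drop (i * m)).take n = (L.get ⟨i, hi⟩).val := by
  intro L
  induction L with
  | nil => intro x h i hi; simp at hi
  | cons u L ih =>
    intro x h i hi
    obtain ⟨hx2, h'⟩ := h.src_eq
    match i with
    | 0 =>
      simp only [Nat.zero_mul, List.drop_zero]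
      have hget : ((u :: L).get ⟨0, hi⟩) = u := rfl
      rw [hget]
      show ((u.val.take m ++ List.replicate (m - n) c0) ++ dbF m n c0 L).take n = u.val
      rw [List.take_append, db_block_len]
      rcases le_or_gt n m with hmn | hmn
      · have h1 : u.val.take m = u.val := List.take_of_length_le (by rw [u.2]; omega)
        rw [show n - m = 0 by omega, List.take_zero, List.append_nil, h1,
          List.take_left' u.2]
      · have hr0 : m - n = 0 := by omega
        rw [hr0]
        simp only [List.replicate_zero, List.append_nil]
        rw [List.take_take, show min n m = m by omega]
        rw [dbP m n c0 L (u.val.drop m) h' (by simp [u.2])]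
        exact List.take_append_drop m u.val
    | i + 1 =>
      have hi' : i < L.length := by
        simp only [List.length_cons] at hi; omega
      show (((u.val.take m ++ List.replicate (m - n) c0) ++ dbF m n c0 L).drop
        ((i + 1) * m)).take n = _
      rw [List.drop_append,
        List.drop_eq_nil_of_le (by rw [db_block_len]; nlinarith), List.nil_append,
        db_block_len, show (i + 1) * m - m = i * m by rw [Nat.succ_mul]; omega]
      rw [ih (u.val.drop m) h' i hi']
      rfl

end Assemble

theorem stmt3 {α : Type*} [Fintype α] [Nonempty α] (m n : ℕ) (hm : 1 ≤ m) (hn : 1 ≤ n) :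
    ∃ w : List α, IsMSdB m n w := by
  classical
  obtain ⟨c0⟩ : Nonempty α := inferInstance
  obtain ⟨L, htr, hnd, hall⟩ := euler (src := fun e : List.Vector α n => e.val.take (n - m))
    (dst := fun e : List.Vector α n => e.val.drop m) (List.replicate (n - m) c0)
    (fun v => db_bal m n v)
    (fun e => db_reach m n hm c0 _ _ (by simp) (by rw [List.length_take, e.2]; omega))
  refine ⟨dbF m n c0 L, ?_⟩
  intro u hu
  obtain ⟨⟨i, hi⟩, hget⟩ := List.mem_iff_get.1 (hall ⟨u, hu⟩)
  have hwlen := dbF_length m n c0 L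
  have hQ := dbQ m n c0 L _ htr
  have hbound : ∀ j : ℕ, j < L.length → j * m + n ≤ (dbF m n c0 L).length := by
    intro j hj
    rw [hwlen]
    have h2 : (j + 1) * m ≤ L.length * m := Nat.mul_le_mul_right m hj
    rw [Nat.succ_mul] at h2
    have h0 : n ≤ m + (n - m) := by omega
    calc j * m + n ≤ j * m + (m + (n - m)) := Nat.add_le_add_left h0 _
      _ = (j * m + m) + (n - m) := by rw [Nat.add_assoc]
      _ ≤ L.length * m + (n - m) := Nat.add_le_add_right h2 _
  refine ⟨i, ⟨hbound i hi, ?_⟩, ?_⟩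
  · rw [hQ i hi, hget]
  · rintro j ⟨hj1, hj2⟩
    have hjlt : j < L.length := by
      by_contra hcon
      push_neg at hcon
      have h2 : L.length * m ≤ j * m := Nat.mul_le_mul_right m hcon
      rw [hwlen] at hj1
      have h3 : L.length * m + (n - m) ≤ j * m + (n - m) := Nat.add_le_add_right h2 _
      have h4 : j * m + n ≤ j * m + (n - m) := le_trans hj1 h3
      have h5 : n ≤ n - m := Nat.le_of_add_le_add_left h4
      omega
    have hval : (L.get ⟨j, hjlt⟩).val = u := by
      rw [← hQ j hjlt]; exact hj2
    have hej : L.get ⟨j, hjlt⟩ = (⟨u, hu⟩ : List.Vector α n) := Subtype.ext hval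
    have hfin : (⟨j, hjlt⟩ : Fin L.length) = ⟨i, hi⟩ :=
      (hnd.get_inj_iff).1 (by rw [hej, hget])
    simpa using hfin
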